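/- arXiv:0908.3157 — 2 statements merged into one kernel-verified Lean document; each statement's English description precedes it below -/
import Mathlib

section
/- Assume dA ≥ 2 and dB ≥ 2. Then the set C₀ = {ρ : ρ a density matrix with [ρ, (Tr_B ρ) ⊗ I_{dB}] = 0} is nowhere dense in the set of all d×d density matrices (equipped with the subspace topology from the space of d×d complex matrices): the closure of C₀ in the set of density matrices has empty interior there. -/
open Matrix MeasureTheory
open scoped Kronecker ComplexOrder

/-- A density matrix: positive semidefinite with unit trace. -/
def IsDensityMatrix {n : Type*} [Fintype n] (ρ : Matrix n n ℂ) : Prop :=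
  ρ.PosSemidef ∧ ρ.trace = 1

/-- Partial trace over the second subsystem. -/
noncomputable def ptraceB {dA dB : ℕ} (ρ : Matrix (Fin dA × Fin dB) (Fin dA × Fin dB) ℂ) :
    Matrix (Fin dA) (Fin dA) ℂ :=
  Matrix.of fun a a' => ∑ b, ρ (a, b) (a', b)

/-- Zero-discord (classical-quantum) states: block diagonal in some
orthonormal local basis of the first subsystem. -/
def IsZeroDiscord {dA dB : ℕ} (ρ : Matrix (Fin dA × Fin dB) (Fin dA × Fin dB) ℂ) : Prop :=
  ∃ (v : Fin dA → (Fin dA → ℂ)) (p : Fin dA → ℝ)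
    (σ : Fin dA → Matrix (Fin dB) (Fin dB) ℂ),
      (∀ j k, star (v j) ⬝ᵥ v k = if j = k then 1 else 0) ∧
      (∀ j, 0 ≤ p j) ∧ (∑ j, p j = 1) ∧
      (∀ j, IsDensityMatrix (σ j)) ∧
      ρ = ∑ j, (p j : ℂ) • (Matrix.vecMulVec (v j) (star (v j)) ⊗ₖ σ j)

namespace C0Aux

set_option linter.unusedSectionVars false

variable {m : Type*} [Fintype m] [DecidableEq m]

noncomputable def XX (i j : m) : Matrix m m ℂ :=
  single i j 1 + single j i 1

noncomputable def ZZ (i j : m) : Matrix m m ℂ :=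
  diagonal (fun k => if k = i then 1 else if k = j then -1 else 0)

lemma stdBasis_conjT (i j : m) : (single i j (1:ℂ))ᴴ = single j i 1 := by
  ext a b
  simp only [conjTranspose_apply, single, of_apply]
  rw [apply_ite (star : ℂ → ℂ)]
  simp [and_comm]

lemma ZZ_herm (i j : m) : (ZZ i j).IsHermitian := by
  unfold ZZ Matrix.IsHermitian
  rw [diagonal_conjTranspose]
  refine congrArg Matrix.diagonal ?_
  funext k
  simp only [Pi.star_apply]
  split_ifs <;> simp

lemma XX_herm (i j : m) : (XX i j).IsHermitian := by
  unfold XX Matrix.IsHermitian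
  rw [conjTranspose_add, stdBasis_conjT, stdBasis_conjT, add_comm]

lemma ZZ_cube (i j : m) : ZZ i j * ZZ i j * ZZ i j = ZZ i j := by
  unfold ZZ
  rw [diagonal_mul_diagonal, diagonal_mul_diagonal]
  refine congrArg Matrix.diagonal ?_
  funext k
  split_ifs <;> ring

lemma XX_sq {i j : m} (hij : i ≠ j) :
    XX i j * XX i j = single i i 1 + single j j 1 := by
  unfold XX
  rw [add_mul, mul_add, mul_add,
    single_mul_single_of_ne (h := hij.symm), single_mul_single_of_ne (h := hij),
    single_mul_single_same, single_mul_single_same, one_mul]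
  abel

lemma XX_cube {i j : m} (hij : i ≠ j) : XX i j * XX i j * XX i j = XX i j := by
  rw [XX_sq hij]
  unfold XX
  rw [add_mul, mul_add, mul_add,
    single_mul_single_of_ne (h := hij), single_mul_single_of_ne (h := hij.symm),
    single_mul_single_same, single_mul_single_same, one_mul]
  abel

lemma ZZ_trace {i j : m} (hij : i ≠ j) : (ZZ i j).trace = 0 := by
  unfold ZZ
  rw [trace_diagonal]
  have : ∀ k : m, (if k = i then (1:ℂ) else if k = j then -1 else 0)
      = (if k = i then (1:ℂ) else 0) + (if k = j then -1 else 0) := by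
    intro k
    by_cases h1 : k = i <;> by_cases h2 : k = j <;> simp_all
  simp only [this, Finset.sum_add_distrib, Finset.sum_ite_eq', Finset.mem_univ, if_true]
  ring

lemma XX_trace {i j : m} (hij : i ≠ j) : (XX i j).trace = 0 := by
  unfold XX
  rw [trace_add]
  have h1 : (single i j (1:ℂ)).trace = 0 := by
    rw [Matrix.trace]
    apply Finset.sum_eq_zero
    intro k _
    simp only [Matrix.diag_apply, single, of_apply]
    rw [if_neg]
    rintro ⟨rfl, rfl⟩; exact hij rfl
  have h2 : (single j i (1:ℂ)).trace = 0 := by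
    rw [Matrix.trace]
    apply Finset.sum_eq_zero
    intro k _
    simp only [Matrix.diag_apply, single, of_apply]
    rw [if_neg]
    rintro ⟨rfl, rfl⟩; exact hij rfl
  rw [h1, h2, add_zero]

lemma ZZ_apply_same (i j : m) : ZZ i j i i = 1 := by
  unfold ZZ
  rw [diagonal_apply_eq]
  simp

lemma XZ_comm_entry {i j : m} (hij : i ≠ j) :
    (XX i j * ZZ i j - ZZ i j * XX i j) i j = -2 := by
  unfold XX ZZ
  rw [Matrix.sub_apply, mul_diagonal, diagonal_mul]
  simp [single, hij, hij.symm]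
  ring

variable {dA dB : ℕ}

lemma ptraceB_add (ρ σ : Matrix (Fin dA × Fin dB) (Fin dA × Fin dB) ℂ) :
    ptraceB (ρ + σ) = ptraceB ρ + ptraceB σ := by
  ext a a'
  simp [ptraceB, Finset.sum_add_distrib]

lemma ptraceB_smul (c : ℂ) (ρ : Matrix (Fin dA × Fin dB) (Fin dA × Fin dB) ℂ) :
    ptraceB (c • ρ) = c • ptraceB ρ := by
  ext a a'
  simp [ptraceB, Finset.mul_sum]

lemma ptraceB_one : ptraceB (1 : Matrix (Fin dA × Fin dB) (Fin dA × Fin dB) ℂ)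
    = (dB : ℂ) • 1 := by
  ext a a'
  by_cases h : a = a' <;>
    simp [ptraceB, one_apply, Prod.ext_iff, h]

lemma ptraceB_kron (A : Matrix (Fin dA) (Fin dA) ℂ) (B : Matrix (Fin dB) (Fin dB) ℂ) :
    ptraceB (A ⊗ₖ B) = B.trace • A := by
  ext a a'
  simp only [ptraceB, of_apply, kroneckerMap_apply, Matrix.smul_apply, Matrix.trace,
    Matrix.diag_apply, smul_eq_mul, Finset.sum_mul]
  rw [← Finset.mul_sum, mul_comm, Finset.sum_mul]

lemma kron_conjT {k l : Type*} [Fintype k] [Fintype l]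
    (A : Matrix k k ℂ) (B : Matrix l l ℂ) : (A ⊗ₖ B)ᴴ = Aᴴ ⊗ₖ Bᴴ := by
  ext ⟨a, b⟩ ⟨a', b'⟩
  simp [conjTranspose_apply, kroneckerMap_apply]

lemma psd_smul_real {k : Type*} [Fintype k] {M : Matrix k k ℂ} (hM : M.PosSemidef)
    {c : ℝ} (hc : 0 ≤ c) : ((c : ℂ) • M).PosSemidef := by
  constructor
  · unfold Matrix.IsHermitian
    rw [conjTranspose_smul, hM.1]
    congr 1
    simp [Complex.star_def, Complex.conj_ofReal]
  · intro x
    have h := hM.2 x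
    exact (hM.smul (Complex.zero_le_real.mpr hc)).2 x

lemma posSemidef_one_add {k : Type*} [Fintype k] [DecidableEq k] {N : Matrix k k ℂ}
    (hN : N.IsHermitian) (h3 : N * N * N = N) : (1 + N).PosSemidef := by
  set α : ℂ := ((Real.sqrt 2 : ℝ) : ℂ)⁻¹ with hα
  have ha : α * α = 1 / 2 := by
    rw [hα, ← mul_inv]
    norm_cast
    rw [Real.mul_self_sqrt (by norm_num)]
    norm_num
  have hstar : star α = α := by
    rw [hα]
    simp [Complex.star_def, Complex.conj_ofReal]
  set B : Matrix k k ℂ := 1 + α • N + (α - 1) • (N * N) with hB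
  have hBH : Bᴴ = B := by
    rw [hB, conjTranspose_add, conjTranspose_add, conjTranspose_one, conjTranspose_smul,
      conjTranspose_smul, conjTranspose_mul, hN.eq, hstar]
    simp [hstar]
  have h3' : N * (N * N) = N := by rw [← mul_assoc, h3]
  have h4 : (N * N) * (N * N) = N * N := by
    rw [mul_assoc, h3']
  have key : Bᴴ * B = 1 + N := by
    rw [hBH, hB]
    simp only [add_mul, mul_add, one_mul, mul_one, smul_mul_smul_comm, smul_mul_assoc,
      mul_smul_comm, h3, h3', h4]
    match_scalars
    · ring
    · linear_combination 2 * ha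
    · linear_combination 2 * ha
  rw [← key]
  exact posSemidef_conjTranspose_mul_self B

lemma quad_three {a : ℂ} {s₁ s₂ s₃ : ℝ}
    (h12 : s₁ ≠ s₂) (h13 : s₁ ≠ s₃) (h23 : s₂ ≠ s₃)
    (H1 : (1 - (s₁ : ℂ)) * a - 2 * (s₁ : ℂ) ^ 2 = 0)
    (H2 : (1 - (s₂ : ℂ)) * a - 2 * (s₂ : ℂ) ^ 2 = 0)
    (H3 : (1 - (s₃ : ℂ)) * a - 2 * (s₃ : ℂ) ^ 2 = 0) : False := by
  have key : ((s₁ : ℂ) - s₂) * ((s₁ : ℂ) - s₃) * ((s₂ : ℂ) - s₃) * (-2) = 0 := by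
    linear_combination ((s₂ : ℂ) - s₃) * H1 - ((s₁ : ℂ) - s₃) * H2 + ((s₁ : ℂ) - s₂) * H3
  have n12 : ((s₁ : ℂ) - s₂) ≠ 0 := sub_ne_zero.mpr (by exact_mod_cast h12)
  have n13 : ((s₁ : ℂ) - s₃) ≠ 0 := sub_ne_zero.mpr (by exact_mod_cast h13)
  have n23 : ((s₂ : ℂ) - s₃) ≠ 0 := sub_ne_zero.mpr (by exact_mod_cast h23)
  have : ((s₁ : ℂ) - s₂) * ((s₁ : ℂ) - s₃) * ((s₂ : ℂ) - s₃) * (-2) ≠ 0 := by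
    apply mul_ne_zero (mul_ne_zero (mul_ne_zero n12 n13) n23)
    norm_num
  exact this key

lemma expand_comm {A : Type*} [Ring A] [Algebra ℂ A] (ρ K H KH : A)
    (h : ρ * K = K * ρ) (c₁ c₂ c₂' c₃ : ℂ) :
    (c₁ • ρ + c₂ • (1 : A) + c₃ • H) * (c₁ • K + c₂' • (1 : A) + c₃ • KH)
      - (c₁ • K + c₂' • (1 : A) + c₃ • KH) * (c₁ • ρ + c₂ • (1 : A) + c₃ • H)
    = (c₁ * c₃) • (ρ * KH - KH * ρ + H * K - K * H) + (c₃ * c₃) • (H * KH - KH * H) := by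
  simp only [add_mul, mul_add, smul_mul_smul_comm, one_mul, mul_one, h]
  module

end C0Aux

set_option maxHeartbeats 1000000 in
/-- For `dA, dB ≥ 2`, the set `C₀` of density matrices
commuting with their reduced state is nowhere dense in the set of all density
matrices (with the subspace topology from matrix space). -/
theorem C0_isNowhereDense (dA dB : ℕ) (hdA : 2 ≤ dA) (hdB : 2 ≤ dB) :
    IsNowhereDense {ρ : {ρ : Matrix (Fin dA × Fin dB) (Fin dA × Fin dB) ℂ // IsDensityMatrix ρ} |
      (ρ : Matrix (Fin dA × Fin dB) (Fin dA × Fin dB) ℂ) *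
          (ptraceB (ρ : Matrix (Fin dA × Fin dB) (Fin dA × Fin dB) ℂ)
            ⊗ₖ (1 : Matrix (Fin dB) (Fin dB) ℂ)) =
        (ptraceB (ρ : Matrix (Fin dA × Fin dB) (Fin dA × Fin dB) ℂ)
            ⊗ₖ (1 : Matrix (Fin dB) (Fin dB) ℂ)) *
          (ρ : Matrix (Fin dA × Fin dB) (Fin dA × Fin dB) ℂ)} := by
  classical
  -- continuity of the basic maps
  have hcont_val : Continuous (fun ρ : {ρ : Matrix (Fin dA × Fin dB) (Fin dA × Fin dB) ℂ //
      IsDensityMatrix ρ} => (ρ : Matrix (Fin dA × Fin dB) (Fin dA × Fin dB) ℂ)) :=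
    continuous_subtype_val
  have hcont_K : Continuous (fun ρ : {ρ : Matrix (Fin dA × Fin dB) (Fin dA × Fin dB) ℂ //
      IsDensityMatrix ρ} => ptraceB (ρ : Matrix (Fin dA × Fin dB) (Fin dA × Fin dB) ℂ)
        ⊗ₖ (1 : Matrix (Fin dB) (Fin dB) ℂ)) := by
    apply continuous_matrix
    rintro ⟨a, b⟩ ⟨a', b'⟩
    simp only [kroneckerMap_apply, ptraceB, of_apply]
    exact Continuous.mul
      (continuous_finset_sum _ fun c _ => hcont_val.matrix_elem _ _) continuous_const
  have hS_closed : IsClosed {ρ : {ρ : Matrix (Fin dA × Fin dB) (Fin dA × Fin dB) ℂ //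
      IsDensityMatrix ρ} |
      (ρ : Matrix (Fin dA × Fin dB) (Fin dA × Fin dB) ℂ) *
          (ptraceB (ρ : Matrix (Fin dA × Fin dB) (Fin dA × Fin dB) ℂ)
            ⊗ₖ (1 : Matrix (Fin dB) (Fin dB) ℂ)) =
        (ptraceB (ρ : Matrix (Fin dA × Fin dB) (Fin dA × Fin dB) ℂ)
            ⊗ₖ (1 : Matrix (Fin dB) (Fin dB) ℂ)) *
          (ρ : Matrix (Fin dA × Fin dB) (Fin dA × Fin dB) ℂ)} :=
    isClosed_eq (hcont_val.matrix_mul hcont_K) (hcont_K.matrix_mul hcont_val)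
  rw [hS_closed.isNowhereDense_iff, Set.eq_empty_iff_forall_notMem]
  intro ρ₀ hρ₀
  -- basic numerics
  have hdAne : (dA : ℂ) ≠ 0 := Nat.cast_ne_zero.mpr (by omega)
  have hdBne : (dB : ℂ) ≠ 0 := Nat.cast_ne_zero.mpr (by omega)
  -- distinguished indices
  set i0 : Fin dA := ⟨0, by omega⟩ with hi0
  set i1 : Fin dA := ⟨1, by omega⟩ with hi1
  set b0 : Fin dB := ⟨0, by omega⟩ with hb0
  set b1 : Fin dB := ⟨1, by omega⟩ with hb1
  have hii : i0 ≠ i1 := by simp [hi0, hi1, Fin.ext_iff]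
  have hbb : b0 ≠ b1 := by simp [hb0, hb1, Fin.ext_iff]
  -- the matrices
  set Xa := C0Aux.XX i0 i1 with hXa
  set Za := C0Aux.ZZ i0 i1 with hZa
  set Zb := C0Aux.ZZ b0 b1 with hZb
  set ρ : Matrix (Fin dA × Fin dB) (Fin dA × Fin dB) ℂ := ρ₀.1 with hρdef
  set H : Matrix (Fin dA × Fin dB) (Fin dA × Fin dB) ℂ :=
    (dB : ℂ)⁻¹ • (Za ⊗ₖ (1 : Matrix (Fin dB) (Fin dB) ℂ)) + Xa ⊗ₖ Zb with hH
  set Kρ : Matrix (Fin dA × Fin dB) (Fin dA × Fin dB) ℂ :=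
    ptraceB ρ ⊗ₖ (1 : Matrix (Fin dB) (Fin dB) ℂ) with hKρ
  set KH : Matrix (Fin dA × Fin dB) (Fin dA × Fin dB) ℂ :=
    Za ⊗ₖ (1 : Matrix (Fin dB) (Fin dB) ℂ) with hKH
  have hcomm : ρ * Kρ = Kρ * ρ := by
    have h := interior_subset hρ₀
    exact h
  -- partial trace of H
  have hptrH : ptraceB H = Za := by
    rw [hH, C0Aux.ptraceB_add, C0Aux.ptraceB_smul, C0Aux.ptraceB_kron, C0Aux.ptraceB_kron,
      trace_one, C0Aux.ZZ_trace hbb, zero_smul, add_zero, smul_smul]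
    rw [Fintype.card_fin]
    rw [inv_mul_cancel₀ hdBne, one_smul]
  -- the curve
  set γ : ℝ → Matrix (Fin dA × Fin dB) (Fin dA × Fin dB) ℂ := fun s =>
    (1 - (s : ℂ)) • ρ + ((s : ℂ) / ((dA : ℂ) * (dB : ℂ))) • 1 + ((s : ℂ) ^ 2) • H with hγ
  -- its partial trace block
  have hKγ : ∀ s : ℝ, ptraceB (γ s) ⊗ₖ (1 : Matrix (Fin dB) (Fin dB) ℂ)
      = (1 - (s : ℂ)) • Kρ + ((s : ℂ) / ((dA : ℂ) * (dB : ℂ)) * (dB : ℂ)) • 1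
        + ((s : ℂ) ^ 2) • KH := by
    intro s
    rw [hγ]
    simp only
    rw [C0Aux.ptraceB_add, C0Aux.ptraceB_add, C0Aux.ptraceB_smul, C0Aux.ptraceB_smul,
      C0Aux.ptraceB_smul, C0Aux.ptraceB_one, hptrH, smul_smul]
    rw [add_kronecker, add_kronecker, smul_kronecker, smul_kronecker, smul_kronecker,
      one_kronecker_one, hKρ, hKH]
  set L : Matrix (Fin dA × Fin dB) (Fin dA × Fin dB) ℂ :=
    ρ * KH - KH * ρ + H * Kρ - Kρ * H with hL
  set Q : Matrix (Fin dA × Fin dB) (Fin dA × Fin dB) ℂ := H * KH - KH * H with hQ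
  -- the quadratic expansion
  have hexp : ∀ s : ℝ, γ s * (ptraceB (γ s) ⊗ₖ (1 : Matrix (Fin dB) (Fin dB) ℂ))
      - (ptraceB (γ s) ⊗ₖ (1 : Matrix (Fin dB) (Fin dB) ℂ)) * γ s
      = ((1 - (s : ℂ)) * (s : ℂ) ^ 2) • L + ((s : ℂ) ^ 2 * (s : ℂ) ^ 2) • Q := by
    intro s
    rw [hKγ s, hγ, hL, hQ]
    simp only
    exact C0Aux.expand_comm ρ Kρ H KH hcomm _ _ _ _
  -- entry of Q
  have hQentry : Q (i0, b0) (i1, b0) = -2 := by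
    have hQeq : Q = (dB : ℂ)⁻¹ • ((Za * Za) ⊗ₖ (1 : Matrix (Fin dB) (Fin dB) ℂ))
        + (Xa * Za) ⊗ₖ Zb
        - ((dB : ℂ)⁻¹ • ((Za * Za) ⊗ₖ (1 : Matrix (Fin dB) (Fin dB) ℂ))
          + (Za * Xa) ⊗ₖ Zb) := by
      rw [hQ, hH, hKH, add_mul, mul_add, smul_mul_assoc, mul_smul_comm]
      simp only [← mul_kronecker_mul, Matrix.mul_one, Matrix.one_mul]
    rw [hQeq, hXa, hZa, hZb]
    have hx := C0Aux.XZ_comm_entry hii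
    rw [Matrix.sub_apply] at hx
    simp only [Matrix.sub_apply, Matrix.add_apply, Matrix.smul_apply, kroneckerMap_apply,
      C0Aux.ZZ_apply_same, mul_one, smul_eq_mul]
    linear_combination hx
  -- trace of the curve
  have hρtr : ρ.trace = 1 := ρ₀.2.2
  have htrace : ∀ s : ℝ, (γ s).trace = 1 := by
    intro s
    rw [hγ]
    simp only
    rw [trace_add, trace_add, trace_smul, trace_smul, trace_smul, hH, trace_add, trace_smul,
      trace_kronecker, trace_kronecker, C0Aux.ZZ_trace hii, C0Aux.XX_trace hii, hρtr,
      Matrix.trace_one, Matrix.trace_one]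
    simp only [Fintype.card_prod, Fintype.card_fin, smul_eq_mul, Nat.cast_mul]
    field_simp
    ring
  -- positivity building blocks
  have hZa1_psd : (1 + Za ⊗ₖ (1 : Matrix (Fin dB) (Fin dB) ℂ)).PosSemidef := by
    apply C0Aux.posSemidef_one_add
    · show _ = _
      rw [C0Aux.kron_conjT, hZa, (C0Aux.ZZ_herm i0 i1).eq, conjTranspose_one]
    · rw [hZa, ← mul_kronecker_mul, ← mul_kronecker_mul, C0Aux.ZZ_cube,
        Matrix.one_mul, Matrix.one_mul]
  have hXZ_psd : (1 + Xa ⊗ₖ Zb).PosSemidef := by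
    apply C0Aux.posSemidef_one_add
    · show _ = _
      rw [C0Aux.kron_conjT, hXa, hZb, (C0Aux.XX_herm i0 i1).eq, (C0Aux.ZZ_herm b0 b1).eq]
    · rw [hXa, hZb, ← mul_kronecker_mul, ← mul_kronecker_mul, C0Aux.ZZ_cube,
        C0Aux.XX_cube hii]
  -- decomposition of the curve into psd pieces
  have hdecomp : ∀ s : ℝ, γ s
      = ((1 - s : ℝ) : ℂ) • ρ
        + ((s / (dA * dB) - s ^ 2 / dB - s ^ 2 : ℝ) : ℂ) • 1
        + ((s ^ 2 / dB : ℝ) : ℂ) • (1 + Za ⊗ₖ (1 : Matrix (Fin dB) (Fin dB) ℂ))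
        + ((s ^ 2 : ℝ) : ℂ) • (1 + Xa ⊗ₖ Zb) := by
    intro s
    rw [hγ]
    simp only
    rw [hH, hKH]
    push_cast
    match_scalars <;> (try field_simp) <;> ring
  set smax : ℝ := 1 / (2 * (dA * dB)) with hsmax
  have hdAr : (2:ℝ) ≤ (dA:ℝ) := by exact_mod_cast hdA
  have hdBr : (2:ℝ) ≤ (dB:ℝ) := by exact_mod_cast hdB
  have hD : (4:ℝ) ≤ (dA:ℝ)*(dB:ℝ) := by nlinarith
  have hsmaxpos : 0 < smax := by rw [hsmax]; positivity
  have hpsd : ∀ s : ℝ, 0 ≤ s → s ≤ smax → (γ s).PosSemidef := by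
    intro s hs0 hs1
    rw [hsmax] at hs1
    push_cast at hs1
    have hsm1 : 1/(2*((dA:ℝ)*(dB:ℝ))) ≤ 1 := by
      rw [div_le_one (by nlinarith)]
      nlinarith
    have e1 : s^2/(dB:ℝ) ≤ s^2 := div_le_self (sq_nonneg s) (by linarith)
    have e2 : s^2 ≤ s/((dA:ℝ)*(dB:ℝ))/2 := by
      have := mul_le_mul_of_nonneg_left hs1 hs0
      calc s^2 = s * s := sq s
        _ ≤ s * (1/(2*((dA:ℝ)*(dB:ℝ)))) := this
        _ = s/((dA:ℝ)*(dB:ℝ))/2 := by ring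
    rw [hdecomp s]
    apply Matrix.PosSemidef.add
    apply Matrix.PosSemidef.add
    apply Matrix.PosSemidef.add
    · exact C0Aux.psd_smul_real ρ₀.2.1 (by linarith)
    · refine C0Aux.psd_smul_real Matrix.PosSemidef.one ?_
      push_cast
      linarith
    · exact C0Aux.psd_smul_real hZa1_psd (by positivity)
    · exact C0Aux.psd_smul_real hXZ_psd (by positivity)
  -- topology
  have hγcont : Continuous γ := by
    rw [hγ]
    apply Continuous.add
    apply Continuous.add
    · exact ((continuous_const.sub Complex.continuous_ofReal)).smul continuous_const
    · exact ((Complex.continuous_ofReal.div_const _)).smul continuous_const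
    · exact ((Complex.continuous_ofReal.pow 2)).smul continuous_const
  have hγ0 : γ 0 = ρ := by
    rw [hγ]
    simp
  rw [mem_interior] at hρ₀
  obtain ⟨U, hUS, hUopen, hU0⟩ := hρ₀
  rw [isOpen_induced_iff] at hUopen
  obtain ⟨V, hV, rfl⟩ := hUopen
  have hρV : γ 0 ∈ V := by rw [hγ0]; exact hU0
  obtain ⟨δ, hδpos, hball⟩ := Metric.isOpen_iff.mp (hV.preimage hγcont) 0 hρV
  set aL : ℂ := L (i0, b0) (i1, b0) with haL
  have key : ∀ s : ℝ, 0 < s → s ≤ smax → s < δ → (1 - (s:ℂ)) * aL - 2 * (s:ℂ)^2 = 0 := by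
    intro s hs0 hs1 hs2
    have hsV : γ s ∈ V :=
      hball (by simpa [Metric.mem_ball, Real.dist_eq, sub_zero, abs_of_pos hs0] using hs2)
    have hden : IsDensityMatrix (γ s) := ⟨hpsd s hs0.le hs1, htrace s⟩
    have hmem := hUS (show (⟨γ s, hden⟩ :
        {ρ : Matrix (Fin dA × Fin dB) (Fin dA × Fin dB) ℂ // IsDensityMatrix ρ})
          ∈ Subtype.val ⁻¹' V from hsV)
    simp only [Set.mem_setOf_eq] at hmem
    have hzero : ((1 - (s:ℂ)) * (s:ℂ)^2) • L + ((s:ℂ)^2 * (s:ℂ)^2) • Q = 0 := by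
      rw [← hexp s, sub_eq_zero]
      exact hmem
    have hentry := congrArg (fun M => M (i0, b0) (i1, b0)) hzero
    simp only [Matrix.add_apply, Matrix.smul_apply, Matrix.zero_apply, smul_eq_mul,
      hQentry, ← haL] at hentry
    have hs0' : (s:ℂ) ≠ 0 := by
      exact_mod_cast hs0.ne'
    have h2 : (s:ℂ)^2 * ((1 - (s:ℂ)) * aL - 2 * (s:ℂ)^2) = 0 := by linear_combination hentry
    rcases mul_eq_zero.mp h2 with h | h
    · exact absurd h (pow_ne_zero 2 hs0')
    · exact h
  set ε : ℝ := min δ smax with hε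
  have hεpos : 0 < ε := lt_min hδpos hsmaxpos
  have hεδ : ε ≤ δ := min_le_left _ _
  have hεs : ε ≤ smax := min_le_right _ _
  exact C0Aux.quad_three
    (show ε/2 ≠ ε/3 from ne_of_gt (by linarith))
    (show ε/2 ≠ ε/4 from ne_of_gt (by linarith))
    (show ε/3 ≠ ε/4 from ne_of_gt (by linarith))
    (key (ε/2) (by linarith) (by linarith) (by linarith))
    (key (ε/3) (by linarith) (by linarith) (by linarith))
    (key (ε/4) (by linarith) (by linarith) (by linarith))
end

section
/- The set Ω₀ of zero-discord states is star-shaped with respect to the maximally mixed state: if ρ ∈ Ω₀ and t ∈ [0,1], then (1−t)·ρ + t·(I/d) ∈ Ω₀. Consequently, Ω₀ is a path-connected subset of the space of d×d complex matrices. -/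
open Matrix MeasureTheory
open scoped Kronecker ComplexOrder


lemma psd_smul_real {n : Type*} [Fintype n] {M : Matrix n n ℂ} (hM : M.PosSemidef)
    {c : ℝ} (hc : 0 ≤ c) : ((c : ℂ) • M).PosSemidef := by
  constructor
  · unfold Matrix.IsHermitian
    rw [conjTranspose_smul, hM.1.eq, Complex.star_def, Complex.conj_ofReal]
  · intro x
    exact (hM.smul (show (0 : ℂ) ≤ (c : ℂ) by exact_mod_cast hc)).2 x

lemma sum_proj_eq_one {dA : ℕ} (v : Fin dA → Fin dA → ℂ)
    (hv : ∀ j k, star (v j) ⬝ᵥ v k = if j = k then 1 else 0) :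
    ∑ j, Matrix.vecMulVec (v j) (star (v j)) = 1 := by
  set V : Matrix (Fin dA) (Fin dA) ℂ := Matrix.of fun j i => star (v j i) with hV
  have h1 : V * Vᴴ = 1 := by
    ext j k
    have := hv j k
    simp only [dotProduct, Pi.star_apply] at this
    simp [mul_apply, hV, conjTranspose_apply, this, one_apply]
    simpa [mul_comm] using this
  have h2 : Vᴴ * V = 1 := mul_eq_one_comm.mp h1
  ext i i'
  have := congrFun (congrFun h2 i) i'
  simp only [mul_apply, conjTranspose_apply, hV, Matrix.of_apply, star_star] at this
  simp only [Matrix.sum_apply, vecMulVec_apply, Pi.star_apply, Complex.star_def]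
  exact this

lemma sum_kronecker' {m n : Type*} [Fintype m] [Fintype n] {ι : Type*} (s : Finset ι)
    (A : ι → Matrix m m ℂ) (B : Matrix n n ℂ) :
    (∑ j ∈ s, A j) ⊗ₖ B = ∑ j ∈ s, (A j ⊗ₖ B) := by
  ext ⟨i, k⟩ ⟨i', k'⟩
  simp [Matrix.kroneckerMap_apply, Matrix.sum_apply, Finset.sum_mul]

lemma starshaped_aux (dA dB : ℕ) (hdA : 0 < dA) (hdB : 0 < dB)
    (ρ : Matrix (Fin dA × Fin dB) (Fin dA × Fin dB) ℂ) (hρ : IsZeroDiscord ρ)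
    (t : ℝ) (ht : t ∈ Set.Icc (0 : ℝ) 1) :
    IsZeroDiscord (((1 - t : ℝ) : ℂ) • ρ +
      (t : ℂ) • ((((dA * dB : ℕ) : ℂ))⁻¹ •
        (1 : Matrix (Fin dA × Fin dB) (Fin dA × Fin dB) ℂ))) := by
  obtain ⟨v, p, σ, hv, hp0, hp1, hσ, hrep⟩ := hρ
  obtain ⟨ht0, ht1⟩ := ht
  have hdA' : (dA : ℝ) ≠ 0 := Nat.cast_ne_zero.mpr hdA.ne'
  have hdB' : (dB : ℝ) ≠ 0 := Nat.cast_ne_zero.mpr hdB.ne'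
  set q : Fin dA → ℝ := fun j => (1 - t) * p j + t / dA with hq
  set τ : Fin dA → Matrix (Fin dB) (Fin dB) ℂ := fun j =>
    (((1 - t) * p j : ℝ) : ℂ) • σ j + ((t / (dA * dB) : ℝ) : ℂ) • 1 with hτ
  have hq0 : ∀ j, 0 ≤ q j := fun j =>
    add_nonneg (mul_nonneg (by linarith) (hp0 j)) (div_nonneg ht0 (Nat.cast_nonneg _))
  refine ⟨v, q, fun j => if h : q j = 0 then σ j else (((q j)⁻¹ : ℝ) : ℂ) • τ j,
    hv, hq0, ?_, ?_, ?_⟩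
  · -- sum of q is 1
    simp only [hq]
    rw [Finset.sum_add_distrib, ← Finset.mul_sum, hp1, Finset.sum_const]
    simp only [Finset.card_fin, nsmul_eq_mul]
    field_simp
    ring
  · -- each σ' is a density matrix
    intro j
    by_cases h : q j = 0
    · simpa [h] using hσ j
    have hτpsd : (τ j).PosSemidef := by
      refine Matrix.PosSemidef.add (psd_smul_real (hσ j).1 ?_) (psd_smul_real .one ?_)
      · exact mul_nonneg (by linarith) (hp0 j)
      · positivity
    have hτtr : (τ j).trace = ((q j : ℝ) : ℂ) := by
      simp only [hτ, trace_add, trace_smul, (hσ j).2, Matrix.trace_one, Fintype.card_fin, smul_eq_mul, mul_one]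
      push_cast
      rw [hq]
      push_cast
      field_simp
    simp only [dif_neg h]
    refine ⟨psd_smul_real hτpsd (inv_nonneg.mpr (hq0 j)), ?_⟩
    rw [trace_smul, hτtr, smul_eq_mul, ← Complex.ofReal_mul, inv_mul_cancel₀ h,
      Complex.ofReal_one]
  · -- the representation
    have key : ∀ j, ((q j : ℝ) : ℂ) •
        (Matrix.vecMulVec (v j) (star (v j)) ⊗ₖ
          (if h : q j = 0 then σ j else (((q j)⁻¹ : ℝ) : ℂ) • τ j)) =
        Matrix.vecMulVec (v j) (star (v j)) ⊗ₖ τ j := by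
      intro j
      by_cases h : q j = 0
      · have h1 : (1 - t) * p j = 0 := by
          have := hq0 j
          have h2 : 0 ≤ t / (dA : ℝ) := div_nonneg ht0 (Nat.cast_nonneg _)
          have h3 : 0 ≤ (1 - t) * p j := mul_nonneg (by linarith) (hp0 j)
          rw [hq] at h
          simp only at h
          linarith
        have h2 : t = 0 := by
          rw [hq] at h
          simp only at h
          have : t / (dA : ℝ) = 0 := by linarith
          field_simp at this
          simpa using this
        have hτ0 : τ j = 0 := by
          show (((1 - t) * p j : ℝ) : ℂ) • σ j + ((t / (dA * dB) : ℝ) : ℂ) • 1 = 0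
          rw [h1, h2]
          simp
        rw [dif_pos h, h, hτ0, Complex.ofReal_zero, zero_smul]
        ext ⟨i, k⟩ ⟨i', k'⟩
        simp [Matrix.kroneckerMap_apply]
      · rw [dif_neg h]
        rw [kronecker_smul, smul_smul, ← Complex.ofReal_mul, mul_inv_cancel₀ h,
          Complex.ofReal_one, one_smul]
    rw [Finset.sum_congr rfl fun j _ => key j]
    have expand : ∀ j, Matrix.vecMulVec (v j) (star (v j)) ⊗ₖ τ j =
        (((1 - t) : ℝ) : ℂ) • ((p j : ℂ) • (Matrix.vecMulVec (v j) (star (v j)) ⊗ₖ σ j)) +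
        ((t / (dA * dB) : ℝ) : ℂ) • (Matrix.vecMulVec (v j) (star (v j)) ⊗ₖ 1) := by
      intro j
      rw [hτ]
      simp only [kronecker_add, kronecker_smul, smul_smul]
      push_cast
      ring_nf
    rw [Finset.sum_congr rfl fun j _ => expand j, Finset.sum_add_distrib,
      ← Finset.smul_sum, ← Finset.smul_sum, ← sum_kronecker', sum_proj_eq_one v hv,
      Matrix.one_kronecker_one, ← hrep]
    congr 1
    rw [smul_smul]
    congr 1
    push_cast
    rw [div_eq_mul_inv]

lemma real_smul_matrix {m : Type*} (r : ℝ) (M : Matrix m m ℂ) :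
    r • M = (r : ℂ) • M := by
  ext i j
  simp [Matrix.smul_apply, Complex.real_smul]

/-- The set `Ω₀` of zero-discord states is star-shaped with
respect to the maximally mixed state `I/d`, and consequently it is a
path-connected subset of matrix space. -/
theorem Omega0_starShaped_pathConnected (dA dB : ℕ) (hdA : 0 < dA) (hdB : 0 < dB) :
    (∀ (ρ : Matrix (Fin dA × Fin dB) (Fin dA × Fin dB) ℂ), IsZeroDiscord ρ →
      ∀ t : ℝ, t ∈ Set.Icc (0 : ℝ) 1 →
        IsZeroDiscord (((1 - t : ℝ) : ℂ) • ρ +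
          (t : ℂ) • ((((dA * dB : ℕ) : ℂ))⁻¹ •
            (1 : Matrix (Fin dA × Fin dB) (Fin dA × Fin dB) ℂ)))) ∧
    IsPathConnected {ρ : Matrix (Fin dA × Fin dB) (Fin dA × Fin dB) ℂ | IsZeroDiscord ρ} := by
  refine ⟨starshaped_aux dA dB hdA hdB, ?_⟩
  set S := {ρ : Matrix (Fin dA × Fin dB) (Fin dA × Fin dB) ℂ | IsZeroDiscord ρ} with hS
  set c : Matrix (Fin dA × Fin dB) (Fin dA × Fin dB) ℂ :=
    (((dA * dB : ℕ) : ℂ))⁻¹ • 1 with hc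
  -- a zero-discord state exists
  have hdB' : (dB : ℝ) ≠ 0 := Nat.cast_ne_zero.mpr hdB.ne'
  have hσden : IsDensityMatrix ((((dB : ℝ)⁻¹ : ℝ) : ℂ) •
      (1 : Matrix (Fin dB) (Fin dB) ℂ)) := by
    constructor
    · exact psd_smul_real .one (by positivity)
    · rw [trace_smul, Matrix.trace_one, Fintype.card_fin, smul_eq_mul]
      push_cast
      field_simp
  have hexists : ∃ ρ₀, ρ₀ ∈ S := by
    refine ⟨_, ⟨fun j => Pi.single j 1,
      fun j => if j = ⟨0, hdA⟩ then 1 else 0,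
      fun _ => (((dB : ℝ)⁻¹ : ℝ) : ℂ) • 1, ?_, ?_, ?_, fun _ => hσden, rfl⟩⟩
    · intro j k
      by_cases h : j = k
      · subst h
        simp [dotProduct, Pi.single_apply]
      · simp [h, dotProduct, Pi.single_apply, Ne.symm h]
    · intro j; positivity
    · simp
  obtain ⟨ρ₀, hρ₀⟩ := hexists
  have hcS : c ∈ S := by
    have h := starshaped_aux dA dB hdA hdB ρ₀ hρ₀ 1 ⟨zero_le_one, le_refl 1⟩
    have e : ((1 - (1 : ℝ) : ℝ) : ℂ) • ρ₀ + ((1 : ℝ) : ℂ) • c = c := by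
      norm_num
    rwa [e] at h
  have hstar : StarConvex ℝ c S := by
    intro y hy a b ha hb hab
    have ha1 : a ≤ 1 := by linarith
    have := starshaped_aux dA dB hdA hdB y hy a ⟨ha, ha1⟩
    have hba : b = 1 - a := by linarith
    rw [real_smul_matrix, real_smul_matrix, hba]
    rw [add_comm]
    exact_mod_cast this
  have : ContractibleSpace S := hstar.contractibleSpace ⟨c, hcS⟩
  exact isPathConnected_iff_pathConnectedSpace.mpr inferInstance
end
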